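/- Suppose H is a bialgebra, φ: Rio → H is an algebra morphism, and {Λ_k}_{k∈Z≥1} is a family of 1-cocycles on H. Let Φ(x) = φ(Π(x)) (coefficientwise) and suppose φ(Y(x)) = F(x), where F(x) ∈ H[[x]] is the unique solution of F(x) = 1 + Σ_{k≥1} Λ_k(F(x)Φ(x)^k) (well-defined since Φ(x) has zero constant term, so only terms with k ≤ n contribute to the coefficient of x^n). Then for every n ≥ 0: if φ is a bialgebra morphism when restricted to FdB^{(n)}, then φ is also a bialgebra morphism when restricted to Rio^{(n)}. -/

import Mathlib

open scoped TensorProduct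

namespace CK

/-! ### Decorated rooted trees, represented by finite prefix-closed sets of addresses.

A vertex is an address `v : List ℕ` (the root is `[]`, children of `v` are `v ++ [n]`).
The partial order of the tree: `u ≤ v` iff `v` is a prefix of `u` (the root is the maximum).
`vdec v` is the decoration of the vertex `v`, and `edec v` is the decoration of the edge
joining a non-root vertex `v` to its parent, recorded together with the decoration of the
parent (an element of `Σ i, E i`). -/
structure PreTree (I : Type) (E : I → Type) : Type where
  supp : Finset (List ℕ)
  vdec : List ℕ → I
  edec : List ℕ → Option (Σ i : I, E i)

variable {I : Type} {E : I → Type}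

/-- Well-formedness: the root address belongs to the tree, the support is closed under
prefixes, and the decoration of the edge from `u` to its child `u ++ [n]` is of the form
`⟨vdec u, e⟩` with `e : E (vdec u)`. -/
def PreTree.WF (t : PreTree I E) : Prop :=
  ([] ∈ t.supp) ∧
  (∀ v ∈ t.supp, ∀ w : List ℕ, w <+: v → w ∈ t.supp) ∧
  (∀ (u : List ℕ) (n : ℕ), u ++ [n] ∈ t.supp →
    ∃ e : E (t.vdec u), t.edec (u ++ [n]) = some ⟨t.vdec u, e⟩)

/-- Isomorphism of decorated rooted trees: a bijection of the vertex sets preserving the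
root, the tree structure and the decorations of vertices and edges. -/
def PreTree.Iso (t s : PreTree I E) : Prop :=
  ∃ f : List ℕ → List ℕ,
    Set.BijOn f ↑t.supp ↑s.supp ∧ f [] = [] ∧
    (∀ (u : List ℕ) (n : ℕ), u ++ [n] ∈ t.supp → ∃ m : ℕ, f (u ++ [n]) = f u ++ [m]) ∧
    (∀ v ∈ t.supp, s.vdec (f v) = t.vdec v) ∧
    (∀ v ∈ t.supp, v ≠ [] → s.edec (f v) = t.edec v)

/-- Well-formed decorated rooted trees. -/
def WFTree (I : Type) (E : I → Type) : Type := {t : PreTree I E // t.WF}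

/-- Isomorphism classes of (well-formed) decorated rooted trees. -/
def TreeCl (I : Type) (E : I → Type) : Type := Quot fun a b : WFTree I E => a.1.Iso b.1

/-- Isomorphism classes of decorated rooted forests: multisets of tree classes. -/
def Forest (I : Type) (E : I → Type) : Type := Multiset (TreeCl I E)

instance : AddCancelCommMonoid (Forest I E) := inferInstanceAs (AddCancelCommMonoid (Multiset (TreeCl I E)))
instance : DecidableEq (List ℕ) := inferInstance

/-- The class of a well-formed tree. -/
def toCl (t : PreTree I E) (h : t.WF) : TreeCl I E := Quot.mk _ ⟨t, h⟩

/-- A representative of an isomorphism class of trees. -/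
noncomputable def rep (c : TreeCl I E) : PreTree I E := (Quot.out c).1

theorem rep_wf (c : TreeCl I E) : (rep c).WF := (Quot.out c).2

/-- The decoration of the root of (a representative of) a tree class. -/
noncomputable def rootDec (c : TreeCl I E) : I := (rep c).vdec []

/-- The children of a vertex `v` in a tree. -/
def childrenAt (t : PreTree I E) (v : List ℕ) : Finset (List ℕ) :=
  t.supp.filter fun c => c ≠ [] ∧ c.dropLast = v

/-- Total weight of a tree with respect to a weight function on the vertex decorations. -/
def wtPre (w : I → ℕ) (t : PreTree I E) : ℕ := ∑ v ∈ t.supp, w (t.vdec v)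

noncomputable def wtCl (w : I → ℕ) (c : TreeCl I E) : ℕ := wtPre w (rep c)

/-- The automorphisms of a decorated rooted tree: bijections of the vertex set fixing the
root, preserving the covering relation (children map to children) and all decorations. -/
def AutSet (t : PreTree I E) : Set ({v // v ∈ t.supp} ≃ {v // v ∈ t.supp}) :=
  {g | (∀ h : ([] : List ℕ) ∈ t.supp, (g ⟨[], h⟩).1 = []) ∧
    (∀ (u : List ℕ) (n : ℕ) (hu : u ∈ t.supp) (h : u ++ [n] ∈ t.supp),
      ∃ m : ℕ, (g ⟨u ++ [n], h⟩).1 = (g ⟨u, hu⟩).1 ++ [m]) ∧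
    (∀ (v : List ℕ) (h : v ∈ t.supp), t.vdec (g ⟨v, h⟩).1 = t.vdec v) ∧
    (∀ (v : List ℕ) (h : v ∈ t.supp), v ≠ [] → t.edec (g ⟨v, h⟩).1 = t.edec v)}

/-- The order of the automorphism group of a decorated rooted tree. -/
noncomputable def autCard (t : PreTree I E) : ℕ := (AutSet t).ncard

noncomputable def autCardCl (c : TreeCl I E) : ℕ := autCard (rep c)

end CK
namespace CK

variable {I : Type} {E : I → Type}

/-- Grafting at the level of raw trees: given a root decoration `i` and a list of pairs
(edge decoration, tree), form the tree whose root is decorated `i` and whose `j`-th root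
edge carries the `j`-th edge decoration and leads to the `j`-th tree. -/
def graftPre (i : I) (l : List (E i × PreTree I E)) : PreTree I E where
  supp := insert [] ((Finset.range l.length).biUnion fun j =>
    ((l[j]?.elim ∅ fun p => p.2.supp).image fun v => j :: v))
  vdec v :=
    match v with
    | [] => i
    | j :: v' => (l[j]?.elim i fun p => p.2.vdec v')
  edec v :=
    match v with
    | [] => none
    | j :: v' => (l[j]?.elim none fun p =>
        if v' = [] then some ⟨i, p.1⟩ else p.2.edec v')

theorem mem_graftPre_supp (i : I) (l : List (E i × PreTree I E)) (v : List ℕ) :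
    v ∈ (graftPre i l).supp ↔
      v = [] ∨ ∃ j : ℕ, j < l.length ∧ ∃ v' : List ℕ,
        v = j :: v' ∧ v' ∈ (l[j]?.elim ∅ fun p => p.2.supp) := by
  simp only [graftPre, Finset.mem_insert, Finset.mem_biUnion, Finset.mem_range,
    Finset.mem_image]
  constructor
  · rintro (h | ⟨j, hj, v', hv', rfl⟩)
    · exact Or.inl h
    · exact Or.inr ⟨j, hj, v', rfl, hv'⟩
  · rintro (h | ⟨j, hj, v', rfl, hv'⟩)
    · exact Or.inl h
    · exact Or.inr ⟨j, hj, v', hv', rfl⟩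

theorem graftPre_wf (i : I) (l : List (E i × PreTree I E))
    (hl : ∀ p ∈ l, p.2.WF) : (graftPre i l).WF := by
  refine ⟨Finset.mem_insert_self _ _, ?_, ?_⟩
  · intro v hv w hw
    rw [mem_graftPre_supp] at hv ⊢
    rcases hv with rfl | ⟨j, hj, v', rfl, hv'⟩
    · left; exact List.prefix_nil.mp hw
    · rcases w with _ | ⟨a, w'⟩
      · exact Or.inl rfl
      · rw [List.cons_prefix_cons] at hw
        obtain ⟨rfl, hw'⟩ := hw
        right
        refine ⟨a, hj, w', rfl, ?_⟩
        have hget : l[a]? = some l[a] := List.getElem?_eq_getElem hj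
        simp only [hget, Option.elim_some] at hv' ⊢
        exact (hl _ (List.getElem_mem hj)).2.1 v' hv' w' hw'
  · intro u n hun
    rw [mem_graftPre_supp] at hun
    rcases hun with h | ⟨j, hj, v', hv, hv'⟩
    · simp at h
    · have hget : l[j]? = some l[j] := List.getElem?_eq_getElem hj
      simp only [hget, Option.elim_some] at hv'
      rcases u with _ | ⟨a, u'⟩
      · simp only [List.nil_append] at hv
        obtain ⟨rfl, rfl⟩ := List.cons.inj hv
        exact ⟨l[n].1, by simp [graftPre, hget]⟩
      · have hv2 : a :: (u' ++ [n]) = j :: v' := by simpa using hv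
        obtain ⟨rfl, rfl⟩ := List.cons.inj hv2
        obtain ⟨e, he⟩ := (hl _ (List.getElem_mem hj)).2.2 u' n hv'
        have hvd : (graftPre i l).vdec (a :: u') = l[a].2.vdec u' := by
          simp [graftPre, hget]
        have hed : (graftPre i l).edec ((a :: u') ++ [n]) = l[a].2.edec (u' ++ [n]) := by
          simp only [List.cons_append]
          simp [graftPre, hget]
        rw [hvd, hed]
        exact ⟨e, he⟩

end CK
namespace CK

variable {I : Type} {E : I → Type}

theorem graftList_wf (i : I) [Fintype (E i)] (fv : E i → Forest I E) :
    ∀ p ∈ ((Finset.univ : Finset (E i)).toList.flatMap fun e =>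
      (fv e).toList.map fun c => (e, rep c)), p.2.WF := by
  intro p hp
  simp only [List.mem_flatMap, List.mem_map] at hp
  obtain ⟨e, -, c, -, rfl⟩ := hp
  exact rep_wf c

/-- Grafting at the level of isomorphism classes: `graftF i fv` is (the class of) the tree
obtained from the disjoint union of the forests `fv e`, `e : E i`, by adjoining a new root
decorated `i`, joined to the root of every component of `fv e` by an edge decorated `e`. -/
noncomputable def graftF (i : I) [Fintype (E i)] (fv : E i → Forest I E) : TreeCl I E :=
  toCl (graftPre i ((Finset.univ : Finset (E i)).toList.flatMap fun e =>
      (fv e).toList.map fun c => (e, rep c)))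
    (graftPre_wf _ _ (graftList_wf i fv))

/-- The subtree (principal downset) of `t` rooted at the vertex `r`, with addresses
relative to `r`. -/
def subPre (t : PreTree I E) (r : List ℕ) : PreTree I E where
  supp := insert [] ((t.supp.filter fun v => r <+: v).image fun v => v.drop r.length)
  vdec v := t.vdec (r ++ v)
  edec v := if v = [] then none else t.edec (r ++ v)

theorem subPre_wf (t : PreTree I E) (ht : t.WF) (r : List ℕ) : (subPre t r).WF := by
  refine ⟨Finset.mem_insert_self _ _, ?_, ?_⟩
  · intro v hv w hw
    simp only [subPre, Finset.mem_insert, Finset.mem_image, Finset.mem_filter] at hv ⊢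
    rcases hv with rfl | ⟨v0, ⟨hv0, hr⟩, rfl⟩
    · left; exact List.prefix_nil.mp hw
    · right
      refine ⟨r ++ w, ⟨?_, List.prefix_append _ _⟩, by simp⟩
      obtain ⟨v1, rfl⟩ := hr
      simp only [List.drop_left] at hw
      exact ht.2.1 _ hv0 _ ((List.prefix_append_right_inj r).mpr hw)
  · intro u n hun
    simp only [subPre, Finset.mem_insert, Finset.mem_image, Finset.mem_filter] at hun
    rcases hun with h | ⟨v0, ⟨hv0, hr⟩, hdrop⟩
    · simp at h
    · obtain ⟨v1, rfl⟩ := hr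
      simp only [List.drop_left] at hdrop
      subst hdrop
      obtain ⟨e, he⟩ := ht.2.2 (r ++ u) n (by rw [← List.append_assoc] at hv0; exact hv0)
      refine ⟨e, ?_⟩
      show (if u ++ [n] = [] then none else t.edec (r ++ (u ++ [n]))) = _
      rw [if_neg (by simp), ← List.append_assoc]
      exact he

noncomputable def subCl (t : PreTree I E) (ht : t.WF) (r : List ℕ) : TreeCl I E :=
  toCl (subPre t r) (subPre_wf t ht r)

/-- `D` is a nonempty-complement downset of the tree `t`:
a subset of the vertices closed under passing to descendants, not containing the root. -/
def IsCut (t : PreTree I E) (D : Finset (List ℕ)) : Prop :=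
  D ⊆ t.supp ∧ ∀ v ∈ D, ∀ w ∈ t.supp, v <+: w → w ∈ D

/-- Remove a downset from a tree. -/
def complPre (t : PreTree I E) (D : Finset (List ℕ)) : PreTree I E where
  supp := insert [] (t.supp \ D)
  vdec := t.vdec
  edec v := if v = [] then none else t.edec v

theorem complPre_wf (t : PreTree I E) (ht : t.WF) (D : Finset (List ℕ))
    (hD : ∀ v ∈ D, ∀ w ∈ t.supp, v <+: w → w ∈ D) : (complPre t D).WF := by
  refine ⟨Finset.mem_insert_self _ _, ?_, ?_⟩
  · intro v hv w hw
    simp only [complPre, Finset.mem_insert, Finset.mem_sdiff] at hv ⊢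
    rcases hv with rfl | ⟨hv1, hv2⟩
    · left; exact List.prefix_nil.mp hw
    · rcases eq_or_ne w [] with rfl | hne
      · exact Or.inl rfl
      · right
        refine ⟨ht.2.1 v hv1 w hw, fun hwD => hv2 (hD w hwD v hv1 hw)⟩
  · intro u n hun
    simp only [complPre, Finset.mem_insert, Finset.mem_sdiff] at hun
    rcases hun with h | ⟨h1, h2⟩
    · simp at h
    · obtain ⟨e, he⟩ := ht.2.2 u n h1
      refine ⟨e, ?_⟩
      show (if u ++ [n] = [] then none else t.edec (u ++ [n])) = _
      rw [if_neg (by simp)]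
      exact he

noncomputable def complCl (t : PreTree I E) (ht : t.WF) (D : Finset (List ℕ))
    (hD : ∀ v ∈ D, ∀ w ∈ t.supp, v <+: w → w ∈ D) : TreeCl I E :=
  toCl (complPre t D) (complPre_wf t ht D hD)

/-- The forest induced by a downset `D` of a tree: one subtree for each minimal
element of `D`. -/
noncomputable def downForest (t : PreTree I E) (ht : t.WF) (D : Finset (List ℕ)) :
    Forest I E :=
  ((D.filter fun r => r = [] ∨ r.dropLast ∉ D).val.map fun r => subCl t ht r)

instance : Singleton (TreeCl I E) (Forest I E) :=
  inferInstanceAs (Singleton (TreeCl I E) (Multiset (TreeCl I E)))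

/-- All terms `(D, t ∖ D)` of the coproduct of a tree class `c`: `D` runs over the
downsets of (a representative of) `c`; the first component is the forest induced by `D`
and the second the complementary forest. -/
noncomputable def cutsTree (c : TreeCl I E) : Multiset (Forest I E × Forest I E) :=
  ((rep c).supp.powerset.val.map fun D =>
    if hD : ∀ v ∈ D, ∀ w ∈ (rep c).supp, v <+: w → w ∈ D then
      ({(downForest (rep c) (rep_wf c) D,
         if ([] : List ℕ) ∈ D then 0 else {complCl (rep c) (rep_wf c) D hD})} :
        Multiset (Forest I E × Forest I E))
    else 0).sum

/-- All terms of the coproduct of a forest: products of cuts of the component trees. -/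
noncomputable def cutsForest (f : Forest I E) : Multiset (Forest I E × Forest I E) :=
  f.toList.foldr (fun c acc =>
    (cutsTree c).bind fun p => acc.map fun q => (p.1 + q.1, p.2 + q.2)) {(0, 0)}

end CK
namespace CK

open scoped TensorProduct

variable (K : Type) [Field K] [CharZero K]
variable {I : Type} {E : I → Type}

/-- The decorated Connes–Kreimer Hopf algebra: the free vector space on isomorphism
classes of decorated forests, with disjoint union of forests as multiplication. -/
abbrev HCK (I : Type) (E : I → Type) : Type := AddMonoidAlgebra K (Forest I E)

/-- The basis element of `HCK` given by a forest. -/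
noncomputable def bF (f : Forest I E) : HCK K I E := AddMonoidAlgebra.ofCoeff (Finsupp.single f 1)

/-- The basis element of `HCK` given by a single tree. -/
noncomputable def bT (c : TreeCl I E) : HCK K I E := bF K ({c} : Forest I E)

/-- The coefficient of a forest in an element of `HCK`. -/
noncomputable def coeF (h : HCK K I E) (f : Forest I E) : K := (h.coeff : Forest I E →₀ K) f

/-- The coproduct of the Connes–Kreimer Hopf algebra: on a basis forest `F` it is the sum
of `D ⊗ (F ∖ D)` over all downsets `D` of `F`. -/
noncomputable def comulCK : HCK K I E →ₗ[K] HCK K I E ⊗[K] HCK K I E :=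
  (Finsupp.lsum K fun f => LinearMap.toSpanSingleton K _
    (((cutsForest f).map fun p => bF K p.1 ⊗ₜ[K] bF K p.2).sum)) ∘ₗ
    (AddMonoidAlgebra.coeffLinearEquiv K).toLinearMap

open scoped Classical in
/-- The counit of the Connes–Kreimer Hopf algebra. -/
noncomputable def counitCK : HCK K I E →ₗ[K] K :=
  (Finsupp.lsum K fun f => LinearMap.toSpanSingleton K _ (if f = 0 then (1 : K) else 0)) ∘ₗ
    (AddMonoidAlgebra.coeffLinearEquiv K).toLinearMap

/-- The grafting operator `B₊^{(i)}` evaluated on a tuple of basis forests, extended to a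
function of tuples of arbitrary elements of `HCK` by multilinearity.  This realizes the
linear map `H^{⊗ E_i} → H` on the tensor power. -/
noncomputable def Bapp (i : I) [Fintype (E i)] (h : E i → HCK K I E) : HCK K I E :=
  ∑ᶠ fv : E i → Forest I E,
    (∏ e : E i, coeF K (h e) (fv e)) • bT K (graftF i fv)

/-- The grafting operator for a single insertion place, as a linear map. -/
noncomputable def Bop (i : I) [Fintype (E i)] : HCK K I E →ₗ[K] HCK K I E :=
  (Finsupp.lsum K fun f => LinearMap.toSpanSingleton K _ (bT K (graftF i (fun _ => f)))) ∘ₗ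
    (AddMonoidAlgebra.coeffLinearEquiv K).toLinearMap

end CK
namespace CK

open scoped TensorProduct
open PowerSeries

variable (K : Type) [Field K] [CharZero K]

/-- Falling factorial `u(u-1)⋯(u-m+1)` of a scalar. -/
def ffall (u : K) (m : ℕ) : K := ∏ k ∈ Finset.range m, (u - k)

/-- Generalized binomial coefficient `u(u-1)⋯(u-m+1)/m!`. -/
noncomputable def binomC (u : K) (m : ℕ) : K := ffall K u m / (Nat.factorial m : K)

variable {K}

/-- Vector falling factorial `μ^{\underline α} = ∏ⱼ μⱼ(μⱼ-1)⋯(μⱼ-αⱼ+1)`. -/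
def ffallVec {J : Type} [Fintype J] (μ : J → K) (α : J → ℕ) : K :=
  ∏ j : J, ffall K (μ j) (α j)

section BinomPow

variable {H : Type} [CommRing H] [Algebra K H]

/-- Binomial series power `F^u = Σ_m (u choose m) (F-1)^m` of a power series
(intended for `F` with constant term 1). -/
noncomputable def binomPow (u : K) (F : PowerSeries H) : PowerSeries H :=
  PowerSeries.mk fun n =>
    ∑ m ∈ Finset.range (n + 1), binomC K u m • (PowerSeries.coeff n ((F - 1) ^ m))

/-- Apply a linear map coefficientwise to a power series. -/
noncomputable def lapp {M N : Type} [Semiring M] [Semiring N] [Module K M] [Module K N]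
    (φ : M →ₗ[K] N) (S : PowerSeries M) : PowerSeries N :=
  PowerSeries.mk fun n => φ (PowerSeries.coeff n S)

end BinomPow

section PolyHopf

variable (K)

/-- The coproduct of the polynomial Hopf algebra `K[L]`, determined by
`Δ L = L ⊗ 1 + 1 ⊗ L`. -/
noncomputable def comulL : Polynomial K →ₐ[K] Polynomial K ⊗[K] Polynomial K :=
  Polynomial.aeval (Polynomial.X ⊗ₜ[K] 1 + 1 ⊗ₜ[K] Polynomial.X)

/-- The counit of the polynomial Hopf algebra `K[L]`, i.e. evaluation at `L = 0`. -/
noncomputable def counitL : Polynomial K →ₐ[K] K := Polynomial.aeval 0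

/-- A linear endomorphism of `K[L]` is a 1-cocycle if `Δ ∘ Λ = Λ ⊗ 1 + (id ⊗ Λ) ∘ Δ`. -/
def IsCocycleL (Λ : Polynomial K →ₗ[K] Polynomial K) : Prop :=
  ∀ f : Polynomial K,
    comulL K (Λ f) = Λ f ⊗ₜ[K] 1 + (TensorProduct.map LinearMap.id Λ) (comulL K f)

variable (σ : Type) [Fintype σ] [DecidableEq σ]

/-- The comodule structure (coaction) of `K[L]` on `K[L_e : e ∈ σ]`, the `σ`-fold tensor
power of `K[L]`; it is the algebra morphism determined by `L_e ↦ L ⊗ 1 + 1 ⊗ L_e`. -/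
noncomputable def coactMv :
    MvPolynomial σ K →ₐ[K] Polynomial K ⊗[K] MvPolynomial σ K :=
  MvPolynomial.aeval fun e => (Polynomial.X ⊗ₜ[K] 1 + 1 ⊗ₜ[K] MvPolynomial.X e)

/-- A linear map `K[L_e : e ∈ σ] → K[L]` is a 1-cocycle if
`Δ ∘ Λ = Λ ⊗ 1 + (id ⊗ Λ) ∘ δ` where `δ` is the coaction. -/
def IsCocycleMv (Λ : MvPolynomial σ K →ₗ[K] Polynomial K) : Prop :=
  ∀ f : MvPolynomial σ K,
    comulL K (Λ f) = Λ f ⊗ₜ[K] 1 + (TensorProduct.map LinearMap.id Λ) (coactMv K σ f)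

/-- The integro-differential operator
`f ↦ ∫₀^L A(∂/∂u_e : e ∈ σ) f |_{all u_e = u} du` associated with a formal power series
`A ∈ K[[L_e : e ∈ σ]]`. -/
noncomputable def intDiffOp (A : MvPowerSeries σ K) :
    MvPolynomial σ K →ₗ[K] Polynomial K :=
  (Finsupp.lsum K fun γ : σ →₀ ℕ => LinearMap.toSpanSingleton K _
    (∑ᶠ α : σ →₀ ℕ,
      (MvPowerSeries.coeff α A *
        (∏ e ∈ γ.support ∪ α.support, ((γ e).descFactorial (α e) : K)) *
        (((γ - α).sum fun _ n => n) + 1 : K)⁻¹) •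
      Polynomial.monomial (((γ - α).sum fun _ n => n) + 1) (1 : K))) ∘ₗ
    (AddMonoidAlgebra.coeffLinearEquiv K).toLinearMap

/-- Substitute `μ_e·L` for the variable `L_e` in a multivariate power series, obtaining a
single-variable power series. -/
noncomputable def diagSubst (μ : σ → K) (A : MvPowerSeries σ K) : PowerSeries K :=
  PowerSeries.mk fun n =>
    ∑ᶠ α : σ →₀ ℕ, (if (α.sum fun _ m => m) = n then
      MvPowerSeries.coeff α A * ∏ e : σ, (μ e) ^ (α e) else 0)

/-- The single-variable integro-differential operator `f ↦ ∫₀^L A(d/du) f(u) du`. -/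
noncomputable def intDiffOp1 (A : PowerSeries K) : Polynomial K →ₗ[K] Polynomial K :=
  LinearMap.comp (intDiffOp K Unit (fun α => PowerSeries.coeff (α ()) A))
    (MvPolynomial.pUnitAlgEquiv K).symm.toLinearMap

/-- `∂/∂L` applied coefficientwise to a power series (in `x`) with coefficients in `K[L]`. -/
noncomputable def dLs (G : PowerSeries (Polynomial K)) : PowerSeries (Polynomial K) :=
  PowerSeries.mk fun n => Polynomial.derivative (PowerSeries.coeff n G)

/-- `∂/∂x` of a power series in `x`. -/
noncomputable def dXs {R : Type} [CommRing R] (G : PowerSeries R) : PowerSeries R :=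
  PowerSeries.mk fun n => (n + 1 : ℕ) • PowerSeries.coeff (n + 1) G

/-- Embed a power series with coefficients in `K` into one with coefficients in `K[L]`. -/
noncomputable def liftC (b : PowerSeries K) : PowerSeries (Polynomial K) :=
  PowerSeries.map (Polynomial.C : K →+* Polynomial K) b

/-- The series of coefficients of `L` of a power series with coefficients in `K[L]`:
the anomalous dimension of a Green function. -/
noncomputable def linCoeffSeries (G : PowerSeries (Polynomial K)) : PowerSeries K :=
  PowerSeries.mk fun n => (PowerSeries.coeff n G).coeff 1

/-- The renormalization group equation `(∂/∂L − β(x)·∂/∂x − γ(x)) G(x,L) = 0`. -/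
def RGE (β γ : PowerSeries K) (G : PowerSeries (Polynomial K)) : Prop :=
  dLs K G = liftC K β * dXs G + liftC K γ * G

end PolyHopf

end CK
namespace CK

variable {I : Type} {E : I → Type}

/-! ### Tubings of rooted trees.

A tube of a rooted tree is a nonempty convex connected set of vertices; a binary tubing is
a maximal laminar family of tubes.  Recall that in our address representation the order of
the tree is: `u ≤ v` iff `v` is a prefix of `u` (the root `[]` is the maximum). -/

/-- A tube: a nonempty convex connected subset of the vertices of `t`.  Equivalently, a
nonempty subset `S` of the vertices having a root `r` (an element of which all elements
of `S` are descendants) such that for any `v ∈ S` all vertices between `r` and `v` belong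
to `S`. -/
def IsTube (t : PreTree I E) (S : Finset (List ℕ)) : Prop :=
  S.Nonempty ∧ S ⊆ t.supp ∧
    ∃ r ∈ S, (∀ v ∈ S, r <+: v) ∧
      (∀ v ∈ S, ∀ w : List ℕ, r <+: w → w <+: v → w ∈ S)

/-- A family of sets is laminar if any two members are nested or disjoint. -/
def Laminar (τ : Finset (Finset (List ℕ))) : Prop :=
  ∀ A ∈ τ, ∀ B ∈ τ, A ⊆ B ∨ B ⊆ A ∨ Disjoint A B

/-- A binary tubing of a rooted tree: a maximal laminar family of tubes. -/
def IsBinaryTubing (t : PreTree I E) (τ : Finset (Finset (List ℕ))) : Prop :=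
  (∀ S ∈ τ, IsTube t S) ∧ Laminar τ ∧
    ∀ τ' : Finset (Finset (List ℕ)),
      τ ⊆ τ' → (∀ S ∈ τ', IsTube t S) → Laminar τ' → τ' = τ

/-- The root of a tube: its unique element of minimal length. -/
noncomputable def tubeRoot (S : Finset (List ℕ)) : List ℕ :=
  (S.val.toList.argmin List.length).getD []

/-- The parent tube of `S` in the tubing `τ` of `t`: the intersection of all tubes of `τ`
strictly containing `S` (together with the vertex set of `t`). -/
noncomputable def parentTube (t : PreTree I E) (τ : Finset (Finset (List ℕ)))
    (S : Finset (List ℕ)) : Finset (List ℕ) :=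
  ((τ.filter fun T => S ⊂ T).val.toList).foldr (fun a b => a ∩ b) t.supp

/-- `S` is an upset of `T` (with respect to the tree order in which the root is maximal). -/
def IsUpsetIn (S T : Finset (List ℕ)) : Prop :=
  ∀ a ∈ S, ∀ b ∈ T, b <+: a → b ∈ S

/-- An upper tube of a binary tubing: a member of `τ` which is an upset in its parent
tube. -/
def IsUpperTube (t : PreTree I E) (τ : Finset (Finset (List ℕ)))
    (S : Finset (List ℕ)) : Prop :=
  S ∈ τ ∧ ∃ T ∈ τ, S ⊂ T ∧ (∀ U ∈ τ, S ⊂ U → T ⊆ U) ∧ IsUpsetIn S T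

/-- The lower tube corresponding to an upper tube `S`: the complement of `S` in its
parent tube. -/
noncomputable def lowerPartner (t : PreTree I E) (τ : Finset (Finset (List ℕ)))
    (S : Finset (List ℕ)) : Finset (List ℕ) :=
  parentTube t τ S \ S

open scoped Classical in
/-- The type of an upper tube `S`: the decoration of the first edge on the path from the
root of `S` to the root of the corresponding lower tube. -/
noncomputable def tubeType (t : PreTree I E) (τ : Finset (Finset (List ℕ)))
    (S : Finset (List ℕ)) : Option (Σ i : I, E i) :=
  t.edec ((tubeRoot (lowerPartner t τ S)).take ((tubeRoot S).length + 1))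

open scoped Classical in
/-- The rank vector of a vertex `v` in a tubing: for each edge type `e ∈ E_{d(v)}`, the
number of upper tubes of type `e` rooted at `v`. -/
noncomputable def rankVec (t : PreTree I E) (τ : Finset (Finset (List ℕ)))
    (v : List ℕ) : E (t.vdec v) → ℕ := fun e =>
  (τ.filter fun S => IsUpperTube t τ S ∧ tubeRoot S = v ∧
    tubeType t τ S = some ⟨t.vdec v, e⟩).card

open scoped Classical in
/-- The (untyped) rank of a vertex `v` in a tubing: the number of upper tubes rooted
at `v`. -/
noncomputable def rank (t : PreTree I E) (τ : Finset (Finset (List ℕ)))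
    (v : List ℕ) : ℕ :=
  (τ.filter fun S => IsUpperTube t τ S ∧ tubeRoot S = v).card

open scoped Classical in
/-- The statistic `b(τ)`: the number of tubes of `τ` containing the root of the tree. -/
noncomputable def bstat (τ : Finset (Finset (List ℕ))) : ℕ :=
  (τ.filter fun S => ([] : List ℕ) ∈ S).card

variable (K : Type) [Field K] [CharZero K]

/-- The Mellin monomial of a tubing `τ` with respect to a family of coefficients
`a_{i,α}`: the product over the non-root vertices `v` of `a_{d(v), rk(τ,v)}`. -/
noncomputable def mel (a : (i : I) → (E i → ℕ) → K) (t : PreTree I E)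
    (τ : Finset (Finset (List ℕ))) : K :=
  ∏ v ∈ t.supp.erase [], a (t.vdec v) (rankVec t τ v)

open scoped Classical in
/-- The `k`-th β-vector of a tubing: for each type `e`, the number of upper tubes of type
`e` containing the root, excluding the `k − 1` outermost upper tubes containing the
root. -/
noncomputable def betaVec (t : PreTree I E) (τ : Finset (Finset (List ℕ)))
    (k : ℕ) : E (t.vdec []) → ℕ := fun e =>
  (τ.filter fun S => IsUpperTube t τ S ∧ ([] : List ℕ) ∈ S ∧
    tubeType t τ S = some ⟨t.vdec [], e⟩ ∧
    k - 1 ≤ (τ.filter fun T => IsUpperTube t τ T ∧ ([] : List ℕ) ∈ T ∧ S ⊂ T).card).card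

/-- The contribution of all tubings of the tree `t` in the tubing expansion:
`Σ_{τ ∈ Tub(t)} mel(τ) Σ_{k=1}^{b(τ)} a_{d(t), β^k(τ)} L^k / k!`. -/
noncomputable def tubingPoly (a : (i : I) → (E i → ℕ) → K) (t : PreTree I E) :
    Polynomial K :=
  ∑ᶠ τ ∈ {τ : Finset (Finset (List ℕ)) | IsBinaryTubing t τ},
    mel K a t τ • ∑ k ∈ Finset.Icc 1 (bstat τ),
      a (t.vdec []) (betaVec t τ k) • Polynomial.monomial k (((Nat.factorial k : K))⁻¹)

/-- The linear-term coefficient of the tubing expansion: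
`σ(t) = Σ_{τ ∈ Tub(t)} a_{d(t), β¹(τ)} mel(τ)`. -/
noncomputable def tubingLin (a : (i : I) → (E i → ℕ) → K) (t : PreTree I E) : K :=
  ∑ᶠ τ ∈ {τ : Finset (Finset (List ℕ)) | IsBinaryTubing t τ},
    a (t.vdec []) (betaVec t τ 1) * mel K a t τ

end CK
namespace CK

open scoped TensorProduct

variable (K : Type) [Field K] [CharZero K]

/-! ### The Riordan Hopf algebra and the Faà di Bruno Hopf algebra.

`Rio` is the polynomial algebra `K[π₁, π₂, …, y₁, y₂, …]`; the variable `Sum.inl m`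
represents `π_{m+1}` and the variable `Sum.inr m` represents `y_{m+1}`. -/
abbrev Rio : Type := MvPolynomial (ℕ ⊕ ℕ) K

/-- The generator `π_n` (`n ≥ 1`) of `Rio`. -/
noncomputable def rioPi (n : ℕ) : Rio K := MvPolynomial.X (Sum.inl (n - 1))

/-- The generator `y_n` (`n ≥ 1`) of `Rio`. -/
noncomputable def rioY (n : ℕ) : Rio K := MvPolynomial.X (Sum.inr (n - 1))

/-- The series `Π(x) = x + Σ_{n≥1} π_n x^{n+1}`. -/
noncomputable def PiS : PowerSeries (Rio K) :=
  PowerSeries.mk fun n => if n = 0 then 0 else if n = 1 then 1 else rioPi K (n - 1)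

/-- The series `Y(x) = 1 + Σ_{n≥1} y_n x^n`. -/
noncomputable def YS : PowerSeries (Rio K) :=
  PowerSeries.mk fun n => if n = 0 then 1 else rioY K n

/-- `π_n` for `n ≥ 0` with the convention `π₀ = 1`. -/
noncomputable def rioPi' (n : ℕ) : Rio K := if n = 0 then 1 else rioPi K n

/-- `y_n` for `n ≥ 0` with the convention `y₀ = 1`. -/
noncomputable def rioY' (n : ℕ) : Rio K := if n = 0 then 1 else rioY K n

/-- The coproduct of the Riordan Hopf algebra, determined on the generators by
`Δ π_n = Σ_{k=0}^n ([x^{n+1}] Π(x)^{k+1}) ⊗ π_k` and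
`Δ y_n = Σ_{j=0}^n ([x^n] Y(x) Π(x)^j) ⊗ y_j`. -/
noncomputable def comulRio : Rio K →ₐ[K] Rio K ⊗[K] Rio K :=
  MvPolynomial.aeval fun v =>
    match v with
    | Sum.inl m =>
        ∑ k ∈ Finset.range (m + 2),
          (PowerSeries.coeff (m + 2) ((PiS K) ^ (k + 1))) ⊗ₜ[K] rioPi' K k
    | Sum.inr m =>
        ∑ j ∈ Finset.range (m + 2),
          (PowerSeries.coeff (m + 1) (YS K * (PiS K) ^ j)) ⊗ₜ[K] rioY' K j

/-- The counit of the Riordan Hopf algebra. -/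
noncomputable def counitRio : Rio K →ₐ[K] K := MvPolynomial.aeval fun _ => 0

/-- The subalgebra `FdB ⊂ Rio` generated by the `π`'s: a copy of the Faà di Bruno Hopf
algebra. -/
noncomputable def fdbInRio : Subalgebra K (Rio K) :=
  Algebra.adjoin K (Set.range fun m : ℕ => (MvPolynomial.X (Sum.inl m) : Rio K))

/-- The subalgebra `FdB^{(n)} ⊆ Rio` generated by `π₁, …, π_{n-1}`. -/
noncomputable def fdbN (n : ℕ) : Subalgebra K (Rio K) :=
  Algebra.adjoin K ((fun m : ℕ => (MvPolynomial.X (Sum.inl m) : Rio K)) ''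
    {m | m + 2 ≤ n})

/-- The subalgebra `Rio^{(n)} ⊆ Rio` generated by `π₁, …, π_{n-1}, y₁, …, y_n`. -/
noncomputable def rioN (n : ℕ) : Subalgebra K (Rio K) :=
  Algebra.adjoin K
    (((fun m : ℕ => (MvPolynomial.X (Sum.inl m) : Rio K)) '' {m | m + 2 ≤ n}) ∪
     ((fun m : ℕ => (MvPolynomial.X (Sum.inr m) : Rio K)) '' {m | m + 1 ≤ n}))

/-- `φ : Rio → A` is a bialgebra morphism when restricted to the subalgebra `S`
(with respect to a coproduct `Δ_A` and counit `ε_A` on `A`). -/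
def IsBialgHomOn {A : Type} [CommRing A] [Algebra K A]
    (ΔA : A →ₗ[K] A ⊗[K] A) (εA : A →ₗ[K] K) (φ : Rio K →ₐ[K] A)
    (S : Subalgebra K (Rio K)) : Prop :=
  ∀ z ∈ S, ΔA (φ z) = (TensorProduct.map φ.toLinearMap φ.toLinearMap) (comulRio K z) ∧
    εA (φ z) = counitRio K z

/-- The Faà di Bruno Hopf algebra `K[π₁, π₂, …]`; variable `m` represents `π_{m+1}`. -/
abbrev FdB : Type := MvPolynomial ℕ K

/-- The generator `π_n` (`n ≥ 1`) of `FdB`. -/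
noncomputable def fdbPi (n : ℕ) : FdB K := MvPolynomial.X (n - 1)

/-- `π_n` for `n ≥ 0` with the convention `π₀ = 1`. -/
noncomputable def fdbPi' (n : ℕ) : FdB K := if n = 0 then 1 else fdbPi K n

/-- The series `Π(x) = x + Σ_{n≥1} π_n x^{n+1}` of the Faà di Bruno Hopf algebra. -/
noncomputable def fdbPiS : PowerSeries (FdB K) :=
  PowerSeries.mk fun n => if n = 0 then 0 else if n = 1 then 1 else fdbPi K (n - 1)

/-- The coproduct of the Faà di Bruno Hopf algebra:
`Δ π_n = Σ_{k=0}^n ([x^{n+1}] Π(x)^{k+1}) ⊗ π_k`. -/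
noncomputable def comulFdB : FdB K →ₐ[K] FdB K ⊗[K] FdB K :=
  MvPolynomial.aeval fun m =>
    ∑ k ∈ Finset.range (m + 2),
      (PowerSeries.coeff (m + 2) ((fdbPiS K) ^ (k + 1))) ⊗ₜ[K] fdbPi' K k

/-- The counit of the Faà di Bruno Hopf algebra. -/
noncomputable def counitFdB : FdB K →ₐ[K] K := MvPolynomial.aeval fun _ => 0

end CK
namespace CK

open scoped TensorProduct

section TPow

variable (K : Type) [Field K] [CharZero K]
variable (E : Type) [Fintype E] [DecidableEq E]
variable (A : Type) [CommRing A] [Algebra K A]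

/-- The inclusion of the `e`-th factor `A → A^{⊗E}`. -/
noncomputable def tpowInclude (e : E) : A →ₗ[K] (⨂[K] _ : E, A) where
  toFun a := PiTensorProduct.tprod K (Function.update (fun _ => (1 : A)) e a)
  map_add' x y := by
    simpa using MultilinearMap.map_update_add (PiTensorProduct.tprod K)
      (fun _ => (1 : A)) e x y
  map_smul' c x := by
    simpa using MultilinearMap.map_update_smul (PiTensorProduct.tprod K)
      (fun _ => (1 : A)) e c x

/-- The canonical left coaction of a bialgebra `A` on its tensor power `A^{⊗E}`, obtained
by applying the coproduct to every factor and multiplying the left tensor legs. -/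
noncomputable def tpowCoaction (ΔA : A →ₗ[K] A ⊗[K] A) :
    (⨂[K] _ : E, A) →ₗ[K] A ⊗[K] (⨂[K] _ : E, A) :=
  (PiTensorProduct.lift
    ((MultilinearMap.mkPiAlgebra K E (A ⊗[K] (⨂[K] _ : E, A))).compLinearMap
      fun e => TensorProduct.map LinearMap.id (tpowInclude K E A e))) ∘ₗ
  (PiTensorProduct.map fun _ => ΔA)

/-- A multilinear map `Λ : A^{⊗E} → A` is a 1-cocycle if (the induced map on the tensor
power satisfies) `Δ ∘ Λ = Λ ⊗ 1 + (id ⊗ Λ) ∘ δ`. -/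
def IsCocycleTPow (ΔA : A →ₗ[K] A ⊗[K] A)
    (Λ : MultilinearMap K (fun _ : E => A) A) : Prop :=
  ∀ z : ⨂[K] _ : E, A,
    ΔA (PiTensorProduct.lift Λ z) =
      (PiTensorProduct.lift Λ z) ⊗ₜ[K] 1 +
      (TensorProduct.map LinearMap.id (PiTensorProduct.lift Λ)) (tpowCoaction K E A ΔA z)

end TPow

end CK
namespace CK

variable (K : Type) [Field K] [CharZero K]

noncomputable def cc (N k : ℕ) : Rio K := PowerSeries.coeff N (YS K * PiS K ^ k)

lemma coeff_YS (n : ℕ) : PowerSeries.coeff n (YS K) = rioY' K n := by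
  simp [YS, rioY', PowerSeries.coeff_mk]

lemma cc_zero (N : ℕ) : cc K N 0 = rioY' K N := by simp [cc, coeff_YS]

lemma constantCoeff_PiS : PowerSeries.constantCoeff (PiS K) = 0 := by
  have : PowerSeries.constantCoeff (PiS K)
      = PowerSeries.coeff 0 (PiS K) := by simp
  rw [this]; simp [PiS]

lemma p_eq_zero {N k : ℕ} (h : N < k) : PowerSeries.coeff N (PiS K ^ k) = 0 := by
  obtain ⟨g, hg⟩ : (PowerSeries.X : PowerSeries (Rio K)) ^ k ∣ PiS K ^ k :=
    pow_dvd_pow_of_dvd (PowerSeries.X_dvd_iff.mpr (constantCoeff_PiS K)) k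
  rw [hg, PowerSeries.coeff_X_pow_mul', if_neg (by omega)]

lemma cc_eq_zero {N k : ℕ} (h : N < k) : cc K N k = 0 := by
  obtain ⟨g, hg⟩ : (PowerSeries.X : PowerSeries (Rio K)) ^ k ∣ YS K * PiS K ^ k :=
    Dvd.dvd.mul_left (pow_dvd_pow_of_dvd (PowerSeries.X_dvd_iff.mpr (constantCoeff_PiS K)) k) _
  rw [cc, hg, PowerSeries.coeff_X_pow_mul', if_neg (by omega)]

lemma p_one (j : ℕ) : PowerSeries.coeff (j + 1) (PiS K ^ 1) = rioPi' K j := by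
  rcases j with _ | j <;> simp [PiS, rioPi', rioPi]

lemma cc_cauchy (N k l : ℕ) :
    cc K N (k + l) = ∑ i ∈ Finset.range (N + 1),
      cc K i k * PowerSeries.coeff (N - i) (PiS K ^ l) := by
  have : YS K * PiS K ^ (k + l) = (YS K * PiS K ^ k) * PiS K ^ l := by ring
  rw [cc, this, PowerSeries.coeff_mul,
    Finset.Nat.sum_antidiagonal_eq_sum_range_succ (fun i j =>
      PowerSeries.coeff i (YS K * PiS K ^ k) *
      PowerSeries.coeff j (PiS K ^ l)) N]
  rfl

end CK

namespace CK

variable (K : Type) [Field K] [CharZero K]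

lemma comul_p_one (M : ℕ) : comulRio K (PowerSeries.coeff M (PiS K)) =
    ∑ l ∈ Finset.range (M + 1),
      (PowerSeries.coeff M (PiS K ^ l)) ⊗ₜ[K] (PowerSeries.coeff l (PiS K)) := by
  match M with
  | 0 => simp [PiS]
  | 1 => simp [PiS, Finset.sum_range_succ, Algebra.TensorProduct.one_def]
  | (m+2) =>
    have h1 : PowerSeries.coeff (m+2) (PiS K) = MvPolynomial.X (Sum.inl m) := by
      simp [PiS, rioPi]
    rw [h1, comulRio, MvPolynomial.aeval_X]
    rw [Finset.sum_range_succ' (fun l => (PowerSeries.coeff (m+2) (PiS K ^ l)) ⊗ₜ[K]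
      (PowerSeries.coeff l (PiS K)))]
    have h0 : (PowerSeries.coeff (m+2) (PiS K ^ 0)) ⊗ₜ[K]
        (PowerSeries.coeff 0 (PiS K)) = 0 := by
      simp [PowerSeries.coeff_one]
    rw [h0, add_zero]
    refine Finset.sum_congr rfl fun k _ => ?_
    congr 1
    rw [← p_one K k, pow_one]

lemma sum_shift {M : Type} [AddCommMonoid M] (N t : ℕ) (ht : t ≤ N) (g : ℕ → M)
    (h1 : ∀ s, s < t → g s = 0) (h2 : ∀ s, N < s → g s = 0) :
    ∑ s ∈ Finset.range (N + 1), g s = ∑ l ∈ Finset.range (N + 1), g (t + l) := by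
  have e1 : ∑ s ∈ Finset.range (N + 1), g s = ∑ s ∈ Finset.Ico t (N + 1), g s := by
    refine (Finset.sum_subset ?_ ?_).symm
    · intro x hx; simp only [Finset.mem_Ico] at hx; exact Finset.mem_range.mpr hx.2
    · intro x hx hx'; simp only [Finset.mem_range] at hx; simp only [Finset.mem_Ico, not_and, not_le] at hx'
      exact h1 x (by omega)
  rw [e1, Finset.sum_Ico_eq_sum_range]
  refine Finset.sum_subset ?_ ?_
  · exact Finset.range_subset_range.mpr (by omega)
  · intro x hx hx'; simp only [Finset.mem_range, not_lt] at hx hx'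
    exact h2 _ (by omega)

lemma star : ∀ (k N : ℕ), comulRio K (cc K N k) =
    ∑ j ∈ Finset.range (N + 1), (cc K N j) ⊗ₜ[K] (cc K j k) := by
  intro k
  induction k with
  | zero =>
    intro N
    match N with
    | 0 => simp [cc_zero, rioY', Algebra.TensorProduct.one_def]
    | (m+1) =>
      have h1 : cc K (m+1) 0 = MvPolynomial.X (Sum.inr m) := by
        simp [cc_zero, rioY', rioY]
      rw [h1, comulRio, MvPolynomial.aeval_X]
      refine Finset.sum_congr rfl fun j _ => ?_
      rw [cc, cc_zero]
  | succ k ih =>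
    intro N
    rw [cc_cauchy K N k 1, map_sum]
    have hterm : ∀ i ∈ Finset.range (N+1),
        comulRio K (cc K i k * PowerSeries.coeff (N - i) (PiS K ^ 1)) =
        ∑ j ∈ Finset.range (N+1), ∑ l ∈ Finset.range (N+1),
          (cc K i j * PowerSeries.coeff (N - i) (PiS K ^ l)) ⊗ₜ[K]
          (cc K j k * PowerSeries.coeff l (PiS K)) := by
      intro i hi
      simp only [Finset.mem_range] at hi
      rw [map_mul, ih i, pow_one, comul_p_one K (N - i)]
      -- extend ranges
      have e1 : ∑ j ∈ Finset.range (i + 1), (cc K i j) ⊗ₜ[K] (cc K j k)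
          = ∑ j ∈ Finset.range (N + 1), (cc K i j) ⊗ₜ[K] (cc K j k) := by
        refine Finset.sum_subset (Finset.range_subset_range.mpr (by omega)) ?_
        intro x hx hx'
        simp only [Finset.mem_range, not_lt] at hx'
        rw [cc_eq_zero K (by omega), TensorProduct.zero_tmul]
      have e2 : ∑ l ∈ Finset.range (N - i + 1),
            (PowerSeries.coeff (N - i) (PiS K ^ l)) ⊗ₜ[K] (PowerSeries.coeff l (PiS K))
          = ∑ l ∈ Finset.range (N + 1),
            (PowerSeries.coeff (N - i) (PiS K ^ l)) ⊗ₜ[K] (PowerSeries.coeff l (PiS K)) := by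
        refine Finset.sum_subset (Finset.range_subset_range.mpr (by omega)) ?_
        intro x hx hx'
        simp only [Finset.mem_range, not_lt] at hx'
        rw [p_eq_zero K (by omega), TensorProduct.zero_tmul]
      rw [e1, e2, Finset.sum_mul_sum]
      refine Finset.sum_congr rfl fun j _ => Finset.sum_congr rfl fun l _ => ?_
      rw [Algebra.TensorProduct.tmul_mul_tmul]
    rw [Finset.sum_congr rfl hterm]
    rw [Finset.sum_comm]
    have hswap : ∀ j ∈ Finset.range (N+1),
        ∑ i ∈ Finset.range (N+1), ∑ l ∈ Finset.range (N+1),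
          (cc K i j * PowerSeries.coeff (N - i) (PiS K ^ l)) ⊗ₜ[K]
          (cc K j k * PowerSeries.coeff l (PiS K))
        = ∑ l ∈ Finset.range (N+1),
            (cc K N (j + l)) ⊗ₜ[K] (cc K j k * PowerSeries.coeff l (PiS K)) := by
      intro j _
      rw [Finset.sum_comm]
      refine Finset.sum_congr rfl fun l _ => ?_
      rw [← TensorProduct.sum_tmul, ← cc_cauchy]
    rw [Finset.sum_congr rfl hswap]
    -- now the RHS
    have hR : ∀ s ∈ Finset.range (N+1), (cc K N s) ⊗ₜ[K] (cc K s (k+1))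
        = ∑ t ∈ Finset.range (N+1),
            (cc K N s) ⊗ₜ[K] (cc K t k * PowerSeries.coeff (s - t) (PiS K)) := by
      intro s hs
      simp only [Finset.mem_range] at hs
      rw [cc_cauchy K s k 1]
      simp only [pow_one]
      rw [TensorProduct.tmul_sum]
      refine Finset.sum_subset (Finset.range_subset_range.mpr (by omega)) ?_
      · intro x hx hx'
        simp only [Finset.mem_range, not_lt] at hx'
        have : s - x = 0 := by omega
        rw [this]
        have h0 : PowerSeries.coeff 0 (PiS K) = 0 := by simp [PiS]
        rw [h0, mul_zero, TensorProduct.tmul_zero]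
    conv_rhs => rw [Finset.sum_congr rfl hR]
    conv_rhs => rw [Finset.sum_comm]
    refine Finset.sum_congr rfl fun t ht => ?_
    simp only [Finset.mem_range] at ht
    have hsh := sum_shift (M := Rio K ⊗[K] Rio K) N t (by omega)
      (fun s => (cc K N s) ⊗ₜ[K] (cc K t k * PowerSeries.coeff (s - t) (PiS K)))
      (fun s hst => by
        have : s - t = 0 := by omega
        simp only [this]
        have h0 : PowerSeries.coeff 0 (PiS K) = 0 := by simp [PiS]
        rw [h0, mul_zero, TensorProduct.tmul_zero])
      (fun s hNs => by
        rw [cc_eq_zero K (by omega), TensorProduct.zero_tmul])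
    rw [hsh]
    refine Finset.sum_congr rfl fun l _ => ?_
    have h : t + l - t = l := by omega
    rw [h]

end CK

namespace CK

variable (K : Type) [Field K] [CharZero K]

lemma coeff_PiS_mem (n i : ℕ) (hi : i ≤ n) :
    PowerSeries.coeff i (PiS K) ∈ Algebra.adjoin K
      ((fun m : ℕ => (MvPolynomial.X (Sum.inl m) : Rio K)) '' {m | m + 2 ≤ n}) := by
  match i with
  | 0 =>
    have : PowerSeries.coeff 0 (PiS K) = 0 := by simp [PiS]
    rw [this]; exact Subalgebra.zero_mem _
  | 1 => simpa [PiS] using Subalgebra.one_mem _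
  | (m+2) =>
    have h1 : PowerSeries.coeff (m+2) (PiS K) = MvPolynomial.X (Sum.inl m) := by
      simp [PiS, rioPi]
    rw [h1]
    exact Algebra.subset_adjoin ⟨m, hi, rfl⟩

lemma p_mem (n : ℕ) : ∀ (k i : ℕ), i ≤ n → PowerSeries.coeff i (PiS K ^ k) ∈
    Algebra.adjoin K ((fun m : ℕ => (MvPolynomial.X (Sum.inl m) : Rio K)) '' {m | m + 2 ≤ n}) := by
  intro k
  induction k with
  | zero =>
    intro i _
    rw [pow_zero, PowerSeries.coeff_one]
    split <;> simp [Subalgebra.one_mem, Subalgebra.zero_mem]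
  | succ k ih =>
    intro i hi
    have : PowerSeries.coeff i (PiS K ^ (k+1))
        = ∑ p ∈ Finset.range (i+1),
            PowerSeries.coeff p (PiS K ^ k) * PowerSeries.coeff (i - p) (PiS K) := by
      rw [pow_succ, PowerSeries.coeff_mul,
        Finset.Nat.sum_antidiagonal_eq_sum_range_succ (fun a b =>
          PowerSeries.coeff a (PiS K ^ k) * PowerSeries.coeff b (PiS K)) i]
    rw [this]
    refine Subalgebra.sum_mem _ fun p hp => Subalgebra.mul_mem _ ?_ ?_
    · exact ih p (by simp only [Finset.mem_range] at hp; omega)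
    · exact coeff_PiS_mem K n _ (by omega)

lemma cc_mem (n N k : ℕ) (hN : N ≤ n) : cc K N (k+1) ∈ Algebra.adjoin K
    (((fun m : ℕ => (MvPolynomial.X (Sum.inl m) : Rio K)) '' {m | m + 2 ≤ n}) ∪
     ((fun m : ℕ => (MvPolynomial.X (Sum.inr m) : Rio K)) '' {m | m + 2 ≤ N})) := by
  have hcauchy := cc_cauchy K N 0 (k+1)
  rw [zero_add] at hcauchy
  rw [hcauchy]
  refine Subalgebra.sum_mem _ fun i hi => ?_
  simp only [Finset.mem_range] at hi
  rcases eq_or_lt_of_le (Nat.lt_succ_iff.mp hi) with rfl | hiN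
  · rw [Nat.sub_self, p_eq_zero K (Nat.succ_pos k), mul_zero]
    exact Subalgebra.zero_mem _
  · refine Subalgebra.mul_mem _ ?_ ?_
    · rw [cc_zero]
      rcases Nat.eq_zero_or_pos i with rfl | hipos
      · simpa [rioY'] using Subalgebra.one_mem _
      · obtain ⟨m, rfl⟩ : ∃ m, i = m + 1 := ⟨i - 1, by omega⟩
        have : rioY' K (m+1) = MvPolynomial.X (Sum.inr m) := by simp [rioY', rioY]
        rw [this]
        have hm2 : m + 2 ≤ N := by omega
        exact Algebra.subset_adjoin (Or.inr ⟨m, hm2, rfl⟩)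
    · refine SetLike.le_def.mp (Algebra.adjoin_mono Set.subset_union_left) ?_
      exact p_mem K n (k+1) (N - i) (by omega)

end CK

namespace CK

open scoped TensorProduct

/-- A 1-cocycle on a bialgebra `H`: `Δ ∘ Λ = Λ ⊗ 1 + (id ⊗ Λ) ∘ Δ`. -/
def IsCocycleBialg (K H : Type) [Field K] [CommRing H] [Bialgebra K H]
    (Λ : H →ₗ[K] H) : Prop :=
  ∀ h : H, Coalgebra.comul (R := K) (Λ h) =
    (Λ h) ⊗ₜ[K] 1 +
    (TensorProduct.map LinearMap.id Λ) (Coalgebra.comul (R := K) h)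

/-- Let `H` be a bialgebra, `φ : Rio → H` an algebra morphism, and
`{Λ_k}_{k≥1}` a family of 1-cocycles on `H`.  Let `Φ(x) = φ(Π(x))` and suppose that
`φ(Y(x)) = F(x)`, where `F(x)` is the unique solution of
`F(x) = 1 + Σ_{k≥1} Λ_k(F(x)Φ(x)^k)`.  Then for every `n ≥ 0`, if `φ` is a bialgebra
morphism when restricted to `FdB^{(n)}`, it is also a bialgebra morphism when restricted
to `Rio^{(n)}`. -/
theorem statement_13 (K : Type) [Field K] [CharZero K]
    (H : Type) [CommRing H] [Bialgebra K H]
    (Λ : ℕ+ → (H →ₗ[K] H)) (hΛ : ∀ k, IsCocycleBialg K H (Λ k))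
    (φ : Rio K →ₐ[K] H) (F : PowerSeries H)
    (hY : lapp φ.toLinearMap (YS K) = F)
    (hF : ∀ n : ℕ, PowerSeries.coeff n F =
      (if n = 0 then 1 else 0) +
      ∑ᶠ k : ℕ+, Λ k (PowerSeries.coeff n
        (F * (lapp φ.toLinearMap (PiS K)) ^ (k : ℕ))))
    (n : ℕ)
    (hfdb : IsBialgHomOn K (Coalgebra.comul (R := K)) (Coalgebra.counit (R := K)) φ
      (fdbN K n)) :
    IsBialgHomOn K (Coalgebra.comul (R := K)) (Coalgebra.counit (R := K)) φ
      (rioN K n) := by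
  classical
  have hone : (1 : H) ≠ 0 := by
    intro h10
    have h := Bialgebra.counit_one (R := K) (A := H)
    rw [h10, map_zero] at h
    exact one_ne_zero h.symm
  haveI : Nontrivial H := nontrivial_of_ne 1 0 hone
  have hεΛ : ∀ (k : ℕ+) (x : H), Coalgebra.counit (R := K) (Λ k x) = 0 := by
    intro k x
    have h2 := congrArg (LinearMap.rTensor H (Coalgebra.counit (R := K) (A := H))) (hΛ k x)
    rw [Coalgebra.rTensor_counit_comul, map_add] at h2
    have e1 : LinearMap.rTensor H (Coalgebra.counit (R := K) (A := H)) ((Λ k x) ⊗ₜ[K] 1)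
        = (Coalgebra.counit (R := K) (Λ k x)) ⊗ₜ[K] (1 : H) := by
      rw [LinearMap.rTensor_tmul]
    have e2 : LinearMap.rTensor H (Coalgebra.counit (R := K) (A := H))
        ((TensorProduct.map LinearMap.id (Λ k)) (Coalgebra.comul (R := K) x))
        = 1 ⊗ₜ[K] (Λ k x) := by
      have e3 : (LinearMap.rTensor H (Coalgebra.counit (R := K) (A := H))).comp
          (TensorProduct.map LinearMap.id (Λ k))
          = (LinearMap.lTensor K (Λ k)).comp
            (LinearMap.rTensor H (Coalgebra.counit (R := K) (A := H))) := by
        apply TensorProduct.ext'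
        intro a b
        simp
      rw [← LinearMap.comp_apply, e3, LinearMap.comp_apply, Coalgebra.rTensor_counit_comul,
        LinearMap.lTensor_tmul]
    rw [e1, e2] at h2
    have h3 : (Coalgebra.counit (R := K) (Λ k x)) ⊗ₜ[K] (1 : H) = 0 := right_eq_add.mp h2
    have h4 := congrArg (TensorProduct.lid K H) h3
    rw [map_zero, TensorProduct.lid_tmul, ← Algebra.algebraMap_eq_smul_one] at h4
    exact (algebraMap K H).injective (h4.trans (map_zero _).symm)
  have hlapp : ∀ S : PowerSeries (Rio K), lapp φ.toLinearMap S
      = PowerSeries.map (φ : Rio K →+* H) S := by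
    intro S
    ext N
    simp [lapp, PowerSeries.coeff_map]
  have hFc : ∀ j, PowerSeries.coeff j F = φ (cc K j 0) := by
    intro j
    have h : cc K j 0 = PowerSeries.coeff j (YS K) := by simp [cc]
    rw [h, ← hY, hlapp, PowerSeries.coeff_map]
    rfl
  have hmapc : ∀ (N k : ℕ),
      PowerSeries.coeff N (F * (lapp φ.toLinearMap (PiS K)) ^ k) = φ (cc K N k) := by
    intro N k
    rw [← hY, hlapp, hlapp, ← map_pow, ← map_mul, PowerSeries.coeff_map, cc]
    rfl
  have hFrec : ∀ N M : ℕ, 1 ≤ N → N ≤ M → PowerSeries.coeff N F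
      = ∑ k ∈ Finset.range M, Λ ⟨k+1, Nat.succ_pos k⟩ (φ (cc K N (k+1))) := by
    intro N M h1 h2
    rw [hF N, if_neg (by omega), zero_add]
    have einj : Function.Injective (fun k : ℕ => (⟨k+1, Nat.succ_pos k⟩ : ℕ+)) := by
      intro a b hab
      have : a + 1 = b + 1 := congrArg Subtype.val hab
      omega
    have hsupp : (Function.support fun k : ℕ+ =>
        Λ k (PowerSeries.coeff N (F * (lapp φ.toLinearMap (PiS K)) ^ (k : ℕ))))
        ⊆ ((Finset.range M).map ⟨_, einj⟩ : Finset ℕ+) := by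
      intro k hk
      simp only [Function.mem_support] at hk
      have hkN : (k : ℕ) ≤ N := by
        by_contra h
        exact hk (by rw [hmapc, cc_eq_zero K (by omega), map_zero, map_zero])
      simp only [Finset.coe_map, Set.mem_image, Finset.mem_coe, Finset.mem_range,
        Function.Embedding.coeFn_mk]
      have hkpos : 0 < (k : ℕ) := k.2
      obtain ⟨j, hj⟩ : ∃ j : ℕ, (k : ℕ) = j + 1 := ⟨(k : ℕ) - 1, by omega⟩
      refine ⟨j, by omega, Subtype.ext ?_⟩
      show j + 1 = (k : ℕ)
      omega
    rw [finsum_eq_sum_of_support_subset _ hsupp, Finset.sum_map]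
    refine Finset.sum_congr rfl fun k hk => ?_
    rw [hmapc]
    rfl
  let G : Subalgebra K (Rio K) :=
    AlgHom.equalizer ((Bialgebra.comulAlgHom K H).comp φ)
        ((Algebra.TensorProduct.map φ φ).comp (comulRio K))
      ⊓ AlgHom.equalizer ((Bialgebra.counitAlgHom K H).comp φ) (counitRio K)
  have hTmap : ∀ x : Rio K ⊗[K] Rio K,
      (TensorProduct.map φ.toLinearMap φ.toLinearMap) x = Algebra.TensorProduct.map φ φ x := by
    intro x
    have h : (TensorProduct.map φ.toLinearMap φ.toLinearMap)
        = (Algebra.TensorProduct.map φ φ).toLinearMap := TensorProduct.ext' fun a b => rfl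
    rw [h]
    rfl
  have hGiff : ∀ z : Rio K, z ∈ G ↔
      (Coalgebra.comul (R := K) (φ z)
          = (TensorProduct.map φ.toLinearMap φ.toLinearMap) (comulRio K z)
        ∧ Coalgebra.counit (R := K) (φ z) = counitRio K z) := by
    intro z
    show (z ∈ _ ⊓ _) ↔ _
    rw [Algebra.mem_inf, AlgHom.mem_equalizer, AlgHom.mem_equalizer]
    simp only [AlgHom.comp_apply, Bialgebra.comulAlgHom_apply, Bialgebra.counitAlgHom_apply,
      hTmap]
  have hA : ∀ m : ℕ, m + 2 ≤ n → (MvPolynomial.X (Sum.inl m) : Rio K) ∈ G := by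
    intro m hm
    have hmem : (MvPolynomial.X (Sum.inl m) : Rio K) ∈ fdbN K n :=
      Algebra.subset_adjoin ⟨m, hm, rfl⟩
    exact (hGiff _).mpr (hfdb _ hmem)
  have hy : ∀ N : ℕ, N ≤ n → 1 ≤ N → (MvPolynomial.X (Sum.inr (N-1)) : Rio K) ∈ G := by
    intro N
    induction N using Nat.strong_induction_on with
    | _ N ih =>
      intro hNn hN1
      have hccG : ∀ k : ℕ, cc K N (k+1) ∈ G := by
        intro k
        refine Algebra.adjoin_le ?_ (cc_mem K n N k hNn)
        rintro z (⟨m, hm, rfl⟩ | ⟨m, hm, rfl⟩)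
        · exact hA m hm
        · simp only [Set.mem_setOf_eq] at hm
          exact ih (m+1) (by omega) (by omega) (by omega)
      have hXN : (MvPolynomial.X (Sum.inr (N-1)) : Rio K) = cc K N 0 := by
        rw [cc_zero]
        obtain ⟨m, rfl⟩ : ∃ m, N = m + 1 := ⟨N-1, by omega⟩
        simp [rioY', rioY]
      have hφXN : φ (MvPolynomial.X (Sum.inr (N-1)) : Rio K) = PowerSeries.coeff N F := by
        rw [hXN, hFc]
      have hΔgood : ∀ k : ℕ, Coalgebra.comul (R := K) (φ (cc K N (k+1)))
          = ∑ j ∈ Finset.range (N+1), φ (cc K N j) ⊗ₜ[K] φ (cc K j (k+1)) := by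
        intro k
        rw [((hGiff _).mp (hccG k)).1, star, map_sum]
        refine Finset.sum_congr rfl fun j _ => ?_
        simp only [TensorProduct.map_tmul, AlgHom.toLinearMap_apply]
      have hRHS : (TensorProduct.map φ.toLinearMap φ.toLinearMap)
          (comulRio K (MvPolynomial.X (Sum.inr (N-1)) : Rio K))
          = ∑ j ∈ Finset.range (N+1), φ (cc K N j) ⊗ₜ[K] (PowerSeries.coeff j F) := by
        rw [hXN, star, map_sum]
        refine Finset.sum_congr rfl fun j _ => ?_
        simp only [TensorProduct.map_tmul, AlgHom.toLinearMap_apply, hFc]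
      have main : Coalgebra.comul (R := K) (φ (MvPolynomial.X (Sum.inr (N-1)) : Rio K))
          = ∑ j ∈ Finset.range (N+1), φ (cc K N j) ⊗ₜ[K] (PowerSeries.coeff j F) := by
        rw [hφXN, hFrec N N hN1 le_rfl, map_sum]
        have step1 : ∀ k ∈ Finset.range N,
            Coalgebra.comul (R := K) (Λ ⟨k+1, Nat.succ_pos k⟩ (φ (cc K N (k+1))))
            = Λ ⟨k+1, Nat.succ_pos k⟩ (φ (cc K N (k+1))) ⊗ₜ[K] (1:H)
              + ∑ j ∈ Finset.range (N+1),
                  φ (cc K N j) ⊗ₜ[K] (Λ ⟨k+1, Nat.succ_pos k⟩ (φ (cc K j (k+1)))) := by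
          intro k _
          rw [hΛ ⟨k+1, Nat.succ_pos k⟩ (φ (cc K N (k+1))), hΔgood k, map_sum]
          congr 1
        rw [Finset.sum_congr rfl step1, Finset.sum_add_distrib]
        have hfirst : ∑ k ∈ Finset.range N,
            (Λ ⟨k+1, Nat.succ_pos k⟩ (φ (cc K N (k+1))) ⊗ₜ[K] (1:H))
            = (PowerSeries.coeff N F) ⊗ₜ[K] (1:H) := by
          rw [← TensorProduct.sum_tmul, ← hFrec N N hN1 le_rfl]
        rw [hfirst, Finset.sum_comm]
        have hsecond : ∀ j ∈ Finset.range (N+1),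
            ∑ k ∈ Finset.range N,
              φ (cc K N j) ⊗ₜ[K] (Λ ⟨k+1, Nat.succ_pos k⟩ (φ (cc K j (k+1))))
            = φ (cc K N j) ⊗ₜ[K] (if j = 0 then (0:H) else PowerSeries.coeff j F) := by
          intro j hj
          simp only [Finset.mem_range] at hj
          rcases Nat.eq_zero_or_pos j with rfl | hjpos
          · rw [if_pos rfl, TensorProduct.tmul_zero]
            refine Finset.sum_eq_zero fun k _ => ?_
            rw [cc_eq_zero K (Nat.succ_pos k), map_zero, map_zero, TensorProduct.tmul_zero]
          · rw [if_neg (by omega), ← TensorProduct.tmul_sum, ← hFrec j N hjpos (by omega)]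
        rw [Finset.sum_congr rfl hsecond]
        rw [Finset.sum_range_succ'
          (fun j => φ (cc K N j) ⊗ₜ[K] (if j = 0 then (0:H) else PowerSeries.coeff j F)) N]
        rw [Finset.sum_range_succ'
          (fun j => φ (cc K N j) ⊗ₜ[K] (PowerSeries.coeff j F)) N]
        have hF0 : PowerSeries.coeff 0 F = 1 := by
          rw [hFc]
          have : cc K 0 0 = 1 := by rw [cc_zero]; simp [rioY']
          rw [this, map_one]
        have hN0 : φ (cc K N 0) = PowerSeries.coeff N F := (hFc N).symm
        simp only [Nat.succ_ne_zero, if_false, if_true, eq_self_iff_true, ite_true,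
          TensorProduct.tmul_zero, add_zero, hF0, hN0]
        abel
      have hε : Coalgebra.counit (R := K) (φ (MvPolynomial.X (Sum.inr (N-1)) : Rio K))
          = counitRio K (MvPolynomial.X (Sum.inr (N-1)) : Rio K) := by
        rw [hφXN, hFrec N N hN1 le_rfl, map_sum]
        have h0 : counitRio K (MvPolynomial.X (Sum.inr (N-1)) : Rio K) = 0 := by
          rw [counitRio, MvPolynomial.aeval_X]
        rw [h0]
        exact Finset.sum_eq_zero fun k _ => hεΛ _ _
      exact (hGiff _).mpr ⟨main.trans hRHS.symm, hε⟩
  have hle : rioN K n ≤ G := by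
    rw [rioN]
    refine Algebra.adjoin_le ?_
    rintro z (⟨m, hm, rfl⟩ | ⟨m, hm, rfl⟩)
    · exact hA m hm
    · simp only [Set.mem_setOf_eq] at hm
      exact hy (m+1) hm (by omega)
  intro z hz
  exact (hGiff z).mp (hle hz)


end CK
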